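/- arXiv:2502.07214 — 4 statements merged into one kernel-verified Lean document; each statement's English description precedes it below -/
import Mathlib

section
/- Pruning lemma: let A and B be finite subsets of Fin k → ℝ≥0. Then the set of minimal elements of A ∪ B (with respect to the product order) equals the set of minimal elements of (minimal elements of A) ∪ (minimal elements of B). Hence pruning each Pareto table before merging does not change the resulting Pareto front. -/
open scoped NNReal

/-- The Pareto front: minimal elements of `S` w.r.t. the product order. -/
def paretoFront {k : ℕ} (S : Set (Fin k → ℝ≥0)) : Set (Fin k → ℝ≥0) :=
  {m | m ∈ S ∧ ¬ ∃ c ∈ S, c < m}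

lemma exists_pareto_le {k : ℕ} {S : Set (Fin k → ℝ≥0)} (hS : S.Finite)
    {x : Fin k → ℝ≥0} (hx : x ∈ S) : ∃ m ∈ paretoFront S, m ≤ x := by
  set T : Set (Fin k → ℝ≥0) := {y ∈ S | y ≤ x}
  have hT : T.Finite := hS.subset (fun y hy => hy.1)
  obtain ⟨m, hmT, hmin⟩ : ∃ m ∈ T, ∀ c ∈ T, id c ≤ id m → id m = id c := by
    obtain ⟨m, hm⟩ := hT.exists_minimal ⟨x, hx, le_refl x⟩
    exact ⟨m, hm.1, fun c hc hle => le_antisymm (hm.2 hc hle) hle⟩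
  refine ⟨m, ⟨hmT.1, ?_⟩, hmT.2⟩
  rintro ⟨c, hc, hlt⟩
  have hcT : c ∈ T := ⟨hc, hlt.le.trans hmT.2⟩
  exact hlt.ne (hmin c hcT hlt.le).symm

/-- pruning lemma: for finite sets `A`, `B` of multi-costs,
the minimal elements of `A ∪ B` equal the minimal elements of
`(minimal elements of A) ∪ (minimal elements of B)`. -/
theorem paretoFront_union_prune {k : ℕ} (A B : Set (Fin k → ℝ≥0))
    (hA : A.Finite) (hB : B.Finite) :
    paretoFront (A ∪ B) = paretoFront (paretoFront A ∪ paretoFront B) := by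
  ext m
  constructor
  · rintro ⟨hmAB, hmin⟩
    have hmem : m ∈ paretoFront A ∪ paretoFront B := by
      rcases hmAB with h | h
      · exact Or.inl ⟨h, fun ⟨c, hc, hlt⟩ => hmin ⟨c, Or.inl hc, hlt⟩⟩
      · exact Or.inr ⟨h, fun ⟨c, hc, hlt⟩ => hmin ⟨c, Or.inr hc, hlt⟩⟩
    refine ⟨hmem, ?_⟩
    rintro ⟨c, hc, hlt⟩
    exact hmin ⟨c, by rcases hc with h | h; exacts [Or.inl h.1, Or.inr h.1], hlt⟩
  · rintro ⟨hmem, hmin⟩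
    have hmAB : m ∈ A ∪ B := by
      rcases hmem with h | h
      · exact Or.inl h.1
      · exact Or.inr h.1
    refine ⟨hmAB, ?_⟩
    rintro ⟨c, hc, hlt⟩
    rcases hc with h | h
    · obtain ⟨m', hm', hle⟩ := exists_pareto_le hA h
      exact hmin ⟨m', Or.inl hm', lt_of_le_of_lt hle hlt⟩
    · obtain ⟨m', hm', hle⟩ := exists_pareto_le hB h
      exact hmin ⟨m', Or.inr hm', lt_of_le_of_lt hle hlt⟩
end

section
/- Soundness of the Pareto tables: for every iteration ℓ : ℕ and every vertex v : V, every cost vector c ∈ D ℓ v is the cost of some walk from s to v with at most ℓ edges. -/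
open scoped NNReal

/-- A walk from `s` to `t`: a nonempty list of vertices starting at `s`,
ending at `t`, with `E u v` for every pair of consecutive vertices. -/
def IsWalk {V : Type*} (E : V → V → Prop) (s t : V) (l : List V) : Prop :=
  l ≠ [] ∧ l.head? = some s ∧ l.getLast? = some t ∧ l.Chain' E

/-- The multi-cost of a walk: componentwise sum of edge weights over
consecutive pairs of vertices (a walk with no edges has cost `0`). -/
def walkCost {V : Type*} {k : ℕ} (w : V → V → Fin k → ℝ≥0) (l : List V) :
    Fin k → ℝ≥0 :=
  ((l.zip l.tail).map fun p => w p.1 p.2).sum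

lemma walkCost_append {V : Type*} {k : ℕ} (w : V → V → Fin k → ℝ≥0) :
    ∀ (l : List V) (u v : V), l.getLast? = some u →
      walkCost w (l ++ [v]) = walkCost w l + w u v := by
  intro l
  induction l with
  | nil => intro u v h; simp at h
  | cons a t ih =>
    intro u v h
    cases t with
    | nil =>
      simp [List.getLast?] at h
      subst h
      simp [walkCost]
    | cons b t' =>
      have h' : (b :: t').getLast? = some u := by
        simpa [List.getLast?_cons_cons] using h
      have := ih u v h'
      simp only [walkCost, List.cons_append, List.zip_cons_cons, List.tail_cons,
        List.map_cons, List.sum_cons] at *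
      rw [this]
      abel

/-- soundness of the Pareto tables: every cost vector in
`D ℓ v` is the cost of some walk from `s` to `v` with at most `ℓ` edges. -/
theorem paretoTable_sound {V : Type*} [Fintype V]
    (E : V → V → Prop) [DecidableRel E] {k : ℕ} (w : V → V → Fin k → ℝ≥0)
    (s : V) (D : ℕ → V → Set (Fin k → ℝ≥0))
    (hD0s : D 0 s = {0})
    (hD0 : ∀ v : V, v ≠ s → D 0 v = ∅)
    (hDstep : ∀ (ℓ : ℕ) (v : V), D (ℓ + 1) v =
      paretoFront (D ℓ v ∪ {x | ∃ u : V, E u v ∧ ∃ c ∈ D ℓ u, x = c + w u v})) :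
    ∀ (ℓ : ℕ) (v : V), ∀ c ∈ D ℓ v,
      ∃ Q : List V, IsWalk E s v Q ∧ Q.length - 1 ≤ ℓ ∧ walkCost w Q = c := by
  intro ℓ
  induction ℓ with
  | zero =>
    intro v c hc
    by_cases hv : v = s
    · subst hv
      rw [hD0s] at hc
      refine ⟨[v], ⟨by simp, by simp, by simp, by exact List.isChain_singleton v⟩, by simp, ?_⟩
      simp [walkCost, hc.symm]
    · rw [hD0 v hv] at hc
      exact absurd hc (Set.notMem_empty c)
  | succ ℓ ih =>
    intro v c hc
    rw [hDstep] at hc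
    rcases hc.1 with h | ⟨u, hE, c', hc', rfl⟩
    · obtain ⟨Q, hw, hlen, hcost⟩ := ih v c h
      exact ⟨Q, hw, hlen.trans (Nat.le_succ ℓ), hcost⟩
    · obtain ⟨Q, ⟨hne, hhd, hlast, hch⟩, hlen, hcost⟩ := ih u c' hc'
      refine ⟨Q ++ [v], ⟨by simp [hne], ?_, by simp, ?_⟩, ?_, ?_⟩
      · rwa [List.head?_append_of_ne_nil _ hne] 
      · show List.IsChain E (Q ++ [v]); rw [List.isChain_append]
        refine ⟨hch, by simp, ?_⟩
        intro x hx y hy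
        rw [hlast] at hx
        simp at hx hy
        subst hx; subst hy
        exact hE
      · simp only [List.length_append, List.length_singleton]
        omega
      · rw [walkCost_append w Q u v hlast, hcost]
end

section
/- Correctness of the Pareto Bellman–Ford algorithm (main theorem): for every iteration ℓ : ℕ and every vertex t : V, the Pareto table D ℓ t equals exactly the set of minimal elements, with respect to the product order on Fin k → ℝ≥0, of the set {cost(Q) : Q is a walk from s to t with at most ℓ edges}. In particular, for the hop bound η and any recourse point t with h t = true (for a classifier h : V → Bool), D η t consists precisely of the Pareto optimal multi-costs of walks from s to t with at most η edges. -/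
open scoped NNReal

section aux
variable {V : Type*} {k : ℕ}

lemma walkCost_cons_cons (w : V → V → Fin k → ℝ≥0) (x y : V) (l : List V) :
    walkCost w (x :: y :: l) = w x y + walkCost w (y :: l) := by
  simp [walkCost]

lemma walkCost_append_singleton (w : V → V → Fin k → ℝ≥0) :
    ∀ (l : List V) (u t : V), l.getLast? = some u →
      walkCost w (l ++ [t]) = walkCost w l + w u t
  | [], u, t, h => by simp at h
  | [a], u, t, h => by
      simp only [List.getLast?_singleton, Option.some.injEq] at h
      subst h
      simp [walkCost]
  | a :: b :: rest, u, t, h => by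
      have ih := walkCost_append_singleton w (b :: rest) u t (by simpa using h)
      simp only [List.cons_append] at *
      rw [walkCost_cons_cons, walkCost_cons_cons, ih, add_assoc]

lemma isWalk_append_singleton {E : V → V → Prop} {s u t : V} {l : List V}
    (hl : IsWalk E s u l) (he : E u t) : IsWalk E s t (l ++ [t]) := by
  obtain ⟨hne, hh, hlast, hch⟩ := hl
  refine ⟨by simp, ?_, by simp [List.getLast?_append], ?_⟩
  · cases l with
    | nil => exact absurd rfl hne
    | cons a l => simpa using hh
  · show List.IsChain E (l ++ [t]); rw [List.isChain_append]
    refine ⟨hch, List.isChain_singleton t, fun x hx y hy => ?_⟩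
    rw [Option.mem_def] at hx hy
    simp only [List.head?_cons, Option.some.injEq] at hy
    rw [hlast, Option.some.injEq] at hx
    subst hx; subst hy; exact he

lemma isWalk_decomp {E : V → V → Prop} {s t : V} {l : List V}
    (hl : IsWalk E s t l) (h2 : 2 ≤ l.length) :
    ∃ u l', IsWalk E s u l' ∧ E u t ∧ l = l' ++ [t] ∧ l'.getLast? = some u := by
  obtain ⟨hne, hh, hlast, hch⟩ := hl
  have hdne : l.dropLast ≠ [] := by
    intro h
    have := congrArg List.length h
    simp [List.length_dropLast] at this
    omega
  obtain ⟨u, hu⟩ : ∃ u, l.dropLast.getLast? = some u := by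
    cases h : l.dropLast.getLast? with
    | none => exact absurd (List.getLast?_eq_none_iff.mp h) hdne
    | some u => exact ⟨u, rfl⟩
  have hgl : l.getLast hne = t := by
    rw [List.getLast?_eq_getLast hne, Option.some.injEq] at hlast
    exact hlast
  have hsplit : l.dropLast ++ [t] = l := by
    conv_rhs => rw [← List.dropLast_append_getLast hne]
    rw [hgl]
  refine ⟨u, l.dropLast, ⟨hdne, ?_, hu, hch.prefix l.dropLast_prefix⟩, ?_, hsplit.symm, hu⟩
  · rw [← hsplit] at hh
    cases hl' : l.dropLast with
    | nil => exact absurd hl' hdne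
    | cons a l'' => rw [hl'] at hh; simpa using hh
  · rw [← hsplit] at hch
    obtain ⟨-, -, hrel⟩ := List.isChain_append.mp hch
    exact hrel u hu t rfl

lemma mem_paretoFront_iff_minimal {S : Set (Fin k → ℝ≥0)} {m : Fin k → ℝ≥0} :
    m ∈ paretoFront S ↔ Minimal (· ∈ S) m := by
  simp only [paretoFront, Set.mem_setOf_eq, Minimal, not_exists, not_and]
  constructor
  · rintro ⟨hm, h⟩
    exact ⟨hm, fun c hc hcm => by
      by_contra hmc
      exact h c hc (lt_of_le_not_ge hcm hmc)⟩
  · rintro ⟨hm, h⟩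
    exact ⟨hm, fun c hc hcm => absurd (h hc hcm.le) (not_le_of_gt hcm)⟩

lemma paretoFront_subset {S : Set (Fin k → ℝ≥0)} : paretoFront S ⊆ S :=
  fun _ h => h.1

lemma exists_paretoFront_le {S : Set (Fin k → ℝ≥0)} (hS : S.Finite)
    {x : Fin k → ℝ≥0} (hx : x ∈ S) : ∃ m ∈ paretoFront S, m ≤ x := by
  obtain ⟨b, hb, hmin⟩ := hS.isPWO.exists_le_minimal hx
  exact ⟨b, mem_paretoFront_iff_minimal.mpr hmin, hb⟩

lemma paretoFront_eq_of_dominates {T S : Set (Fin k → ℝ≥0)} (hTS : T ⊆ S)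
    (hdom : ∀ x ∈ S, ∃ y ∈ T, y ≤ x) : paretoFront T = paretoFront S := by
  ext m
  constructor
  · rintro ⟨hmT, h⟩
    refine ⟨hTS hmT, ?_⟩
    rintro ⟨c, hc, hcm⟩
    obtain ⟨y, hyT, hyc⟩ := hdom c hc
    exact h ⟨y, hyT, lt_of_le_of_lt hyc hcm⟩
  · rintro ⟨hmS, h⟩
    obtain ⟨y, hyT, hym⟩ := hdom m hmS
    have : y = m := by
      by_contra hne
      exact h ⟨y, hTS hyT, lt_of_le_of_ne hym hne⟩
    subst this
    exact ⟨hyT, fun ⟨c, hc, hcm⟩ => h ⟨c, hTS hc, hcm⟩⟩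

variable (E : V → V → Prop) (w : V → V → Fin k → ℝ≥0) (s : V)

/-- The set of costs of walks of length ≤ ℓ. -/
def Wset (ℓ : ℕ) (t : V) : Set (Fin k → ℝ≥0) :=
  {c | ∃ Q : List V, IsWalk E s t Q ∧ Q.length - 1 ≤ ℓ ∧ walkCost w Q = c}

lemma Wset_finite [Fintype V] (ℓ : ℕ) (t : V) : (Wset E w s ℓ t).Finite := by
  have : Wset E w s ℓ t ⊆ walkCost w '' {l : List V | l.length ≤ ℓ + 1} := by
    rintro c ⟨Q, hQ, hlen, rfl⟩
    exact ⟨Q, by simp only [Set.mem_setOf_eq]; omega, rfl⟩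
  exact Set.Finite.subset (Set.Finite.image _ (List.finite_length_le V (ℓ+1))) this

lemma Wset_zero_s : Wset E w s 0 s = {0} := by
  ext c
  simp only [Wset, Set.mem_setOf_eq, Set.mem_singleton_iff]
  constructor
  · rintro ⟨Q, ⟨hne, hh, hlast, -⟩, hlen, rfl⟩
    match Q, hne, hlen with
    | [a], _, _ => simp [walkCost]
  · rintro rfl
    exact ⟨[s], ⟨by simp, by simp, by simp, List.isChain_singleton s⟩, by simp, by simp [walkCost]⟩

lemma Wset_zero_ne {t : V} (ht : t ≠ s) : Wset E w s 0 t = ∅ := by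
  ext c
  simp only [Wset, Set.mem_setOf_eq, Set.mem_empty_iff_false, iff_false]
  rintro ⟨Q, ⟨hne, hh, hlast, -⟩, hlen, rfl⟩
  match Q, hne, hlen with
  | [a], _, _ =>
    simp only [List.head?_cons, Option.some.injEq] at hh
    simp only [List.getLast?_singleton, Option.some.injEq] at hlast
    exact ht (hlast ▸ hh ▸ rfl)

lemma Wset_succ (ℓ : ℕ) (t : V) :
    Wset E w s (ℓ + 1) t =
      Wset E w s ℓ t ∪ {x | ∃ u : V, E u t ∧ ∃ c ∈ Wset E w s ℓ u, x = c + w u t} := by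
  ext c
  simp only [Wset, Set.mem_union, Set.mem_setOf_eq]
  constructor
  · rintro ⟨Q, hQ, hlen, rfl⟩
    by_cases hle : Q.length - 1 ≤ ℓ
    · exact Or.inl ⟨Q, hQ, hle, rfl⟩
    · have h2 : 2 ≤ Q.length := by omega
      obtain ⟨u, l', hl', he, rfl, hlast⟩ := isWalk_decomp hQ h2
      refine Or.inr ⟨u, he, walkCost w l', ⟨l', hl', ?_, rfl⟩,
        (walkCost_append_singleton w l' u t hlast).symm ▸ rfl⟩
      have hq : (l' ++ [t]).length = l'.length + 1 := by simp
      omega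
  · rintro (⟨Q, hQ, hle, rfl⟩ | ⟨u, he, c', ⟨Q, hQ, hle, rfl⟩, rfl⟩)
    · exact ⟨Q, hQ, by omega, rfl⟩
    · refine ⟨Q ++ [t], isWalk_append_singleton hQ he, ?_,
        walkCost_append_singleton w Q u t ?_⟩
      · have hq : (Q ++ [t]).length = Q.length + 1 := by simp
        omega
      · obtain ⟨hne, -, hlast, -⟩ := hQ; exact hlast

end aux

/-- correctness of the Pareto Bellman–Ford algorithm:
`D ℓ t` equals exactly the set of minimal elements of the set of costs of
walks from `s` to `t` with at most `ℓ` edges; in particular, for the hop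
bound `η` and any recourse point `t` with `h t = true`, `D η t` consists
precisely of the Pareto optimal multi-costs of walks from `s` to `t` with at
most `η` edges. -/
theorem paretoBellmanFord_correct {V : Type*} [Fintype V]
    (E : V → V → Prop) [DecidableRel E] {k : ℕ} (w : V → V → Fin k → ℝ≥0)
    (s : V) (D : ℕ → V → Set (Fin k → ℝ≥0))
    (hD0s : D 0 s = {0})
    (hD0 : ∀ v : V, v ≠ s → D 0 v = ∅)
    (hDstep : ∀ (ℓ : ℕ) (v : V), D (ℓ + 1) v =
      paretoFront (D ℓ v ∪ {x | ∃ u : V, E u v ∧ ∃ c ∈ D ℓ u, x = c + w u v})) :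
    (∀ (ℓ : ℕ) (t : V), D ℓ t =
      paretoFront {c | ∃ Q : List V,
        IsWalk E s t Q ∧ Q.length - 1 ≤ ℓ ∧ walkCost w Q = c}) ∧
    (∀ (h : V → Bool) (η : ℕ) (t : V), h t = true → D η t =
      paretoFront {c | ∃ Q : List V,
        IsWalk E s t Q ∧ Q.length - 1 ≤ η ∧ walkCost w Q = c}) := by
  have main : ∀ (ℓ : ℕ) (t : V), D ℓ t = paretoFront (Wset E w s ℓ t) := by
    intro ℓ
    induction ℓ with
    | zero =>
      intro t
      by_cases hts : t = s
      · subst hts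
        rw [hD0s, Wset_zero_s]
        ext c
        simp only [paretoFront, Set.mem_singleton_iff, Set.mem_setOf_eq]
        constructor
        · rintro rfl
          exact ⟨rfl, by rintro ⟨d, rfl, hd⟩; exact absurd hd (lt_irrefl 0)⟩
        · rintro ⟨rfl, -⟩; rfl
      · rw [hD0 t hts, Wset_zero_ne E w s hts]
        ext c
        simp [paretoFront]
    | succ ℓ ih =>
      intro t
      rw [hDstep ℓ t, Wset_succ]
      apply paretoFront_eq_of_dominates
      · rintro x (hx | ⟨u, he, c, hc, rfl⟩)
        · exact Or.inl (paretoFront_subset ((ih t) ▸ hx))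
        · exact Or.inr ⟨u, he, c, paretoFront_subset ((ih u) ▸ hc), rfl⟩
      · rintro x (hx | ⟨u, he, c, hc, rfl⟩)
        · obtain ⟨m, hm, hle⟩ := exists_paretoFront_le (Wset_finite E w s ℓ t) hx
          exact ⟨m, Or.inl ((ih t).symm ▸ hm), hle⟩
        · obtain ⟨m, hm, hle⟩ := exists_paretoFront_le (Wset_finite E w s ℓ u) hc
          exact ⟨m + w u t, Or.inr ⟨u, he, m, (ih u).symm ▸ hm, rfl⟩,
            add_le_add_left hle _⟩
  exact ⟨fun ℓ t => main ℓ t, fun h η t _ => main η t⟩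
end

section
/- Correctness of the sorted scan for two criteria: let L be a list of points in ℝ≥0 × ℝ≥0 that is sorted in strictly increasing lexicographic order. Then a point p in L is a minimal element of the set of points of L with respect to the product order (i.e., no q in L satisfies q.1 ≤ p.1, q.2 ≤ p.2, and q ≠ p) if and only if every point q occurring strictly before p in L satisfies p.2 < q.2. -/
open scoped NNReal

/-- correctness of the sorted scan for two criteria: in a list
of points sorted in strictly increasing lexicographic order, a point `p` of
the list is minimal in the product order among the points of the list iff
every point occurring strictly before `p` has second coordinate strictly
greater than `p.2`. -/
theorem sorted_scan_correct (L : List (ℝ≥0 × ℝ≥0))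
    (hsort : L.Pairwise fun q p : ℝ≥0 × ℝ≥0 =>
      q.1 < p.1 ∨ (q.1 = p.1 ∧ q.2 < p.2))
    (p : ℝ≥0 × ℝ≥0) (hp : p ∈ L) :
    (¬ ∃ q ∈ L, q.1 ≤ p.1 ∧ q.2 ≤ p.2 ∧ q ≠ p) ↔
    (∀ i j : Fin L.length, i < j → L.get j = p → p.2 < (L.get i).2) := by
  constructor
  · intro hmin i j hij hj
    by_contra hle
    push_neg at hle
    have hrel := hsort.rel_get_of_lt hij
    rw [hj] at hrel
    apply hmin
    refine ⟨L.get i, L.get_mem i, ?_, hle, ?_⟩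
    · rcases hrel with h | ⟨h, _⟩
      · exact le_of_lt h
      · exact le_of_eq h
    · intro hqp
      rw [hqp] at hrel
      rcases hrel with h | ⟨_, h⟩ <;> exact lt_irrefl _ h
  · intro hscan ⟨q, hqL, hq1, hq2, hqne⟩
    obtain ⟨j, hj⟩ := List.mem_iff_get.mp hp
    obtain ⟨i, hi⟩ := List.mem_iff_get.mp hqL
    rcases lt_trichotomy i j with h | h | h
    · have := hscan i j h hj
      rw [hi] at this
      exact absurd hq2 (not_le.mpr this)
    · exact hqne (by rw [← hi, ← hj, h])
    · have hrel := hsort.rel_get_of_lt h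
      rw [hi, hj] at hrel
      rcases hrel with hlt | ⟨heq, hlt⟩
      · exact absurd hq1 (not_le.mpr hlt)
      · exact absurd hq2 (not_le.mpr hlt)
end
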